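/- Let A, B, E, L, H, R, G be real matrices of compatible dimensions with R, G symmetric positive definite, and let q_{μν} (ν = 1,...,M) be reals with q_{μν} ≥ 0 for ν ≠ μ. Let Y(ν) ∈ ℝ^{n×n} be symmetric positive definite for each ν and set X(ν) = Y(ν)⁻¹. If the block LMI [[G₁₁, G₁₂, G₁₃],[G₁₂ᵀ, G₂₂, 0],[G₁₃ᵀ, 0, G₃₃]] < 0 holds (with blocks defined as in Theorem 3, evaluated at mode μ, with positive scalars τ̃ᵘ, τ̃, θ̃ⱼ, β̄), then with τᵘ = (τ̃ᵘ)⁻¹, τ = τ̃⁻¹, θⱼ = θ̃ⱼ⁻¹, βᵘ = β̄⁻¹ τ̃ᵘ, the Riccati-type matrix inequality AᵀX(μ) + X(μ)A + Σ_ν q_{μν} X(ν) + R + X(μ)(B̄₂B̄₂ᵀ - B G⁻¹ Bᵀ)X(μ) + τᵘ βᵘ I + (τ + θ̄) HᵀH < 0 holds, where B̄₂ = [(τᵘ)^{-1/2}B, τ^{-1/2}E, θ^{-1/2}L] and θ̄ = Σ_{j≠i} θⱼ. -/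

import Mathlib

open Matrix

private lemma dot_symm_shift {n : ℕ} {S : Matrix (Fin n) (Fin n) ℝ} (hS : Sᵀ = S)
    (x z : Fin n → ℝ) : x ⬝ᵥ (S *ᵥ z) = (S *ᵥ x) ⬝ᵥ z := by
  rw [dotProduct_mulVec]
  nth_rewrite 1 [← hS]
  rw [vecMul_transpose]

private lemma finsum_mulVec {ι : Type*} {n : ℕ} (s : Finset ι)
    (f : ι → Matrix (Fin n) (Fin n) ℝ) (v : Fin n → ℝ) :
    (∑ ν ∈ s, f ν) *ᵥ v = ∑ ν ∈ s, (f ν *ᵥ v) := by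
  ext i
  simp only [mulVec, dotProduct, Matrix.sum_apply, Finset.sum_apply, Finset.sum_mul]
  rw [Finset.sum_comm]

private lemma dotProduct_finsum {ι : Type*} {n : ℕ} (s : Finset ι)
    (x : Fin n → ℝ) (f : ι → (Fin n → ℝ)) :
    x ⬝ᵥ (∑ ν ∈ s, f ν) = ∑ ν ∈ s, x ⬝ᵥ (f ν) := by
  simp only [dotProduct, Finset.sum_apply, Finset.mul_sum]
  rw [Finset.sum_comm]

/-- equivalence (one direction), via congruence by `Y(μ) = X(μ)⁻¹` and Schur
complements, between the block LMI (12) of Theorem 3 (blocks `G₁₁, G₁₂, G₁₃, G₂₂, G₃₃`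
evaluated at mode `μ`, with positive scalars `τ̃ᵘ, τ̃, θ̃ⱼ, β̄`) and the coupled
Riccati-type inequality (10) of Theorem 1, with `τᵘ = (τ̃ᵘ)⁻¹`, `τ = τ̃⁻¹`,
`θⱼ = θ̃ⱼ⁻¹`, `βᵘ = β̄⁻¹ τ̃ᵘ`, `B̄₂ = [(τᵘ)^{-1/2} B, τ^{-1/2} E, θᵢ^{-1/2} L]` and
`θ̄ = ∑_{j ≠ i} θⱼ`. -/
theorem lmi_implies_riccati
    (n m g s h N M : ℕ) (i : Fin N) (μ : Fin M)
    (A : Matrix (Fin n) (Fin n) ℝ) (B : Matrix (Fin n) (Fin m) ℝ)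
    (E : Matrix (Fin n) (Fin g) ℝ) (L : Matrix (Fin n) (Fin s) ℝ)
    (H : Matrix (Fin h) (Fin n) ℝ)
    (R : Matrix (Fin n) (Fin n) ℝ) (hR : R.PosDef) (hRsymm : R.IsSymm)
    (Gw : Matrix (Fin m) (Fin m) ℝ) (hGw : Gw.PosDef) (hGwsymm : Gw.IsSymm)
    (q : Fin M → ℝ) (hq : ∀ ν : Fin M, ν ≠ μ → 0 ≤ q ν)
    (Y : Fin M → Matrix (Fin n) (Fin n) ℝ) (hY : ∀ ν, (Y ν).PosDef)
    (hYsymm : ∀ ν, (Y ν).IsSymm)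
    (X : Fin M → Matrix (Fin n) (Fin n) ℝ) (hX : ∀ ν, X ν = (Y ν)⁻¹)
    (τut τt βb : ℝ) (θt : Fin N → ℝ)
    (hτut : 0 < τut) (hτt : 0 < τt) (hβb : 0 < βb) (hθt : ∀ j, 0 < θt j)
    -- the blocks of the LMI (12)
    (G11 : Matrix (Fin n) (Fin n) ℝ)
    (hG11 : G11 = Y μ * Aᵀ + A * Y μ + q μ • Y μ - B * Gw⁻¹ * Bᵀ
      + τut • (B * Bᵀ) + τt • (E * Eᵀ) + θt i • (L * Lᵀ))
    (G12 : Matrix (Fin n) ({ν : Fin M // ν ≠ μ} × Fin n) ℝ)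
    (hG12 : G12 = Matrix.of fun a b => Real.sqrt (q b.1.1) * Y μ a b.2)
    (G22 : Matrix ({ν : Fin M // ν ≠ μ} × Fin n) ({ν : Fin M // ν ≠ μ} × Fin n) ℝ)
    (hG22 : G22 = Matrix.of fun a b => if a.1 = b.1 then -Y a.1.1 a.2 b.2 else 0)
    (G13 : Matrix (Fin n) (Fin n ⊕ Fin n ⊕ Fin h ⊕ ({j : Fin N // j ≠ i} × Fin h)) ℝ)
    (hG13 : G13 = Matrix.of fun a b =>
      Sum.elim (fun k => Y μ a k)
        (Sum.elim (fun k => Y μ a k)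
          (Sum.elim (fun k => (Y μ * Hᵀ) a k) (fun jk => (Y μ * Hᵀ) a jk.2))) b)
    (G33 : Matrix (Fin n ⊕ Fin n ⊕ Fin h ⊕ ({j : Fin N // j ≠ i} × Fin h))
      (Fin n ⊕ Fin n ⊕ Fin h ⊕ ({j : Fin N // j ≠ i} × Fin h)) ℝ)
    (hG33 : G33 = Matrix.fromBlocks (-(R⁻¹)) 0 0
      (Matrix.fromBlocks (-(βb • (1 : Matrix (Fin n) (Fin n) ℝ))) 0 0
        (Matrix.fromBlocks (-(τt • (1 : Matrix (Fin h) (Fin h) ℝ))) 0 0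
          (Matrix.of fun a b => if a = b then -θt a.1.1 else 0))))
    -- the LMI (12): the full block matrix is negative definite
    (hLMI : (-(Matrix.fromBlocks G11
        (Matrix.of fun a b => Sum.elim (G12 a) (G13 a) b)
        (Matrix.of fun a b => Sum.elim (fun c => G12 b c) (fun c => G13 b c) a)
        (Matrix.fromBlocks G22 0 0 G33))).PosDef)
    -- the transformed scalars
    (τu τ βu : ℝ) (θ : Fin N → ℝ)
    (hτu : τu = τut⁻¹) (hτ : τ = τt⁻¹) (hθ : ∀ j, θ j = (θt j)⁻¹)
    (hβu : βu = βb⁻¹ * τut)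
    (B2 : Matrix (Fin n) (Fin m ⊕ Fin g ⊕ Fin s) ℝ)
    (hB2 : B2 = Matrix.of fun a b =>
      Sum.elim (fun k => Real.sqrt τu⁻¹ * B a k)
        (Sum.elim (fun k => Real.sqrt τ⁻¹ * E a k)
          (fun k => Real.sqrt (θ i)⁻¹ * L a k)) b)
    (θbar : ℝ) (hθbar : θbar = ∑ j ∈ Finset.univ.erase i, θ j) :
    -- the Riccati-type matrix inequality (10)
    (-(Aᵀ * X μ + X μ * A + ∑ ν : Fin M, q ν • X ν + R
        + X μ * (B2 * B2ᵀ - B * Gw⁻¹ * Bᵀ) * X μ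
        + (τu * βu) • (1 : Matrix (Fin n) (Fin n) ℝ)
        + (τ + θbar) • (Hᵀ * H))).PosDef := by
  -- basic facts
  have hYdet : ∀ ν, IsUnit (Y ν).det := fun ν => isUnit_iff_ne_zero.2 (hY ν).det_pos.ne'
  have hRdet : IsUnit R.det := isUnit_iff_ne_zero.2 hR.det_pos.ne'
  have hXY : ∀ ν, X ν * Y ν = 1 := fun ν => by
    rw [hX]; exact Matrix.nonsing_inv_mul _ (hYdet ν)
  have hYX : ∀ ν, Y ν * X ν = 1 := fun ν => by
    rw [hX]; exact Matrix.mul_nonsing_inv _ (hYdet ν)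
  have hYt : ∀ ν, (Y ν)ᵀ = Y ν := fun ν => hYsymm ν
  have hXt : ∀ ν, (X ν)ᵀ = X ν := fun ν => by
    rw [hX, Matrix.transpose_nonsing_inv, hYt]
  have hGwt : (Gw⁻¹)ᵀ = Gw⁻¹ := by rw [Matrix.transpose_nonsing_inv, hGwsymm]
  have hτu' : τu⁻¹ = τut := by rw [hτu, inv_inv]
  have hτ' : τ⁻¹ = τt := by rw [hτ, inv_inv]
  have hθ' : ∀ j, (θ j)⁻¹ = θt j := fun j => by rw [hθ, inv_inv]
  have sq : ∀ (c : ℝ), 0 ≤ c → ∀ (x y : ℝ),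
      (Real.sqrt c * x) * (Real.sqrt c * y) = c * (x * y) := fun c hc x y => by
    rw [mul_mul_mul_comm, Real.mul_self_sqrt hc]
  have hB2B2 : B2 * B2ᵀ = τut • (B * Bᵀ) + τt • (E * Eᵀ) + θt i • (L * Lᵀ) := by
    ext a b
    simp only [hB2, Matrix.mul_apply, Matrix.transpose_apply, Matrix.of_apply,
      Fintype.sum_sum_type, Matrix.add_apply, Matrix.smul_apply, smul_eq_mul,
      hτu', hτ', hθ', Sum.elim_inl, Sum.elim_inr]
    rw [Finset.mul_sum, Finset.mul_sum, Finset.mul_sum,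
      Finset.sum_congr rfl fun k _ => sq τut hτut.le (B a k) (B b k),
      Finset.sum_congr rfl fun k _ => sq τt hτt.le (E a k) (E b k),
      Finset.sum_congr rfl fun k _ => sq (θt i) (hθt i).le (L a k) (L b k)]
    ring
  rw [Matrix.posDef_iff_dotProduct_mulVec]
  constructor
  · -- Hermitian part
    rw [Matrix.IsHermitian, Matrix.conjTranspose_eq_transpose_of_trivial,
      Matrix.transpose_neg]
    congr 1
    simp only [Matrix.transpose_add, Matrix.transpose_mul, Matrix.transpose_sub,
      Matrix.transpose_smul, Matrix.transpose_one, Matrix.transpose_sum,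
      Matrix.transpose_transpose, hXt, hGwt, hRsymm.eq, Matrix.mul_assoc]
    noncomm_ring
  · intro v hv
    -- notation
    set u : Fin n → ℝ := X μ *ᵥ v with hu_def
    have hu : Y μ *ᵥ u = v := by
      rw [hu_def, Matrix.mulVec_mulVec, hYX, Matrix.one_mulVec]
    have hYXv : ∀ ν, Y ν *ᵥ (X ν *ᵥ v) = v := fun ν => by
      rw [Matrix.mulVec_mulVec, hYX, Matrix.one_mulVec]
    have hune : u ≠ 0 := fun hz => hv (by rw [← hu, hz, Matrix.mulVec_zero])
    have huY : u ᵥ* Y μ = v := by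
      rw [← Matrix.vecMul_transpose] at hu
      rw [← hYt μ]; exact hu
    have huYe : ∀ k, (∑ a, u a * Y μ a k) = v k := fun k => congrFun huY k
    set Hv : Fin h → ℝ := H *ᵥ v with hHv_def
    set w2 : {ν : Fin M // ν ≠ μ} × Fin n → ℝ :=
      fun p => Real.sqrt (q p.1.1) * (X p.1.1 *ᵥ v) p.2 with hw2_def
    set w3 : Fin n ⊕ Fin n ⊕ Fin h ⊕ ({j : Fin N // j ≠ i} × Fin h) → ℝ :=
      Sum.elim (R *ᵥ v) (Sum.elim (βb⁻¹ • v) (Sum.elim (τt⁻¹ • Hv)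
        (fun jk => (θt jk.1.1)⁻¹ * Hv jk.2))) with hw3_def
    set w : (Fin n ⊕ ({ν : Fin M // ν ≠ μ} × Fin n ⊕
        (Fin n ⊕ Fin n ⊕ Fin h ⊕ ({j : Fin N // j ≠ i} × Fin h)))) → ℝ :=
      Sum.elim u (Sum.elim w2 w3) with hw_def
    have hwne : w ≠ 0 := by
      intro hz
      exact hune (funext fun a => congrFun hz (Sum.inl a))
    have hw := (Matrix.posDef_iff_dotProduct_mulVec.mp hLMI).2 hwne
    -- abbreviations for the recurring scalars
    set S : ℝ := ∑ p : {ν : Fin M // ν ≠ μ}, q p.1 * (v ⬝ᵥ (X p.1 *ᵥ v)) with hS_def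
    set T : ℝ := ∑ j : {j : Fin N // j ≠ i}, (θt j.1)⁻¹ with hT_def
    -- the five pieces
    have ha : u ⬝ᵥ (G11 *ᵥ u) = v ⬝ᵥ (Aᵀ *ᵥ u) + u ⬝ᵥ (A *ᵥ v) + q μ * (v ⬝ᵥ u)
        + u ⬝ᵥ ((B2 * B2ᵀ - B * Gw⁻¹ * Bᵀ) *ᵥ u) := by
      have hG11' : G11 = Y μ * Aᵀ + A * Y μ + q μ • Y μ + (B2 * B2ᵀ - B * Gw⁻¹ * Bᵀ) := by
        rw [hG11, hB2B2]; noncomm_ring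
      rw [hG11', Matrix.add_mulVec, Matrix.add_mulVec, Matrix.add_mulVec,
        dotProduct_add, dotProduct_add, dotProduct_add]
      congr 2
      · congr 1
        · rw [← Matrix.mulVec_mulVec, dot_symm_shift (hYt μ), hu]
        · rw [← Matrix.mulVec_mulVec, hu]
      · rw [Matrix.smul_mulVec, dotProduct_smul, smul_eq_mul,
          dot_symm_shift (hYt μ), hu]
    have hb : (u ᵥ* G12) ⬝ᵥ w2 = S := by
      have h1 : u ᵥ* G12 = fun p => Real.sqrt (q p.1.1) * v p.2 := by
        funext p
        simp only [hG12, Matrix.vecMul, dotProduct, Matrix.of_apply]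
        rw [show (∑ a, u a * (Real.sqrt (q p.1.1) * Y μ a p.2))
            = Real.sqrt (q p.1.1) * ∑ a, u a * Y μ a p.2 by
          rw [Finset.mul_sum]; exact Finset.sum_congr rfl fun a _ => by ring]
        rw [huYe]
      rw [h1, hS_def]
      simp only [dotProduct, hw2_def]
      rw [Fintype.sum_prod_type]
      refine Finset.sum_congr rfl fun p _ => ?_
      rw [Finset.mul_sum]
      exact Finset.sum_congr rfl fun k _ => sq (q p.1) (hq p.1 p.2) (v k) ((X p.1 *ᵥ v) k)
    have hc : w2 ⬝ᵥ (G22 *ᵥ w2) = -S := by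
      have hrow : ∀ (ρ : {ν : Fin M // ν ≠ μ}) (k : Fin n),
          (∑ l, Y ρ.1 k l * (X ρ.1 *ᵥ v) l) = v k := fun ρ k => by
        have := congrFun (hYXv ρ.1) k
        simpa [Matrix.mulVec, dotProduct] using this
      have h2 : G22 *ᵥ w2 = fun p => -(Real.sqrt (q p.1.1) * v p.2) := by
        funext p
        simp only [hG22, Matrix.mulVec, dotProduct, Matrix.of_apply]
        rw [Fintype.sum_prod_type]
        simp only [ite_mul, zero_mul, Finset.sum_ite_irrel, Finset.sum_const_zero,
          Finset.sum_ite_eq, Finset.mem_univ, if_true, hw2_def]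
        rw [show (∑ l, -Y p.1.1 p.2 l * (Real.sqrt (q p.1.1) * (X p.1.1 *ᵥ v) l))
            = -(Real.sqrt (q p.1.1) * ∑ l, Y p.1.1 p.2 l * (X p.1.1 *ᵥ v) l) by
          rw [Finset.mul_sum, ← Finset.sum_neg_distrib]
          exact Finset.sum_congr rfl fun l _ => by ring]
        rw [hrow p.1 p.2]
      rw [h2, hS_def]
      simp only [dotProduct, hw2_def]
      rw [Fintype.sum_prod_type, ← Finset.sum_neg_distrib]
      refine Finset.sum_congr rfl fun p _ => ?_
      rw [Finset.mul_sum, ← Finset.sum_neg_distrib]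
      refine Finset.sum_congr rfl fun k _ => ?_
      have hsq := sq (q p.1) (hq p.1 p.2) ((X p.1 *ᵥ v) k) (v k)
      rw [mul_neg, hsq]
      ring
    have hd : (u ᵥ* G13) ⬝ᵥ w3 = v ⬝ᵥ (R *ᵥ v) + βb⁻¹ * (v ⬝ᵥ v)
        + τt⁻¹ * (Hv ⬝ᵥ Hv) + T * (Hv ⬝ᵥ Hv) := by
      have hHYv : u ᵥ* (Y μ * Hᵀ) = Hv := by
        rw [← Matrix.vecMul_vecMul, huY, Matrix.vecMul_transpose, hHv_def]
      have h3 : u ᵥ* G13 = Sum.elim v (Sum.elim v (Sum.elim Hv (fun jk => Hv jk.2))) := by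
        funext b
        rcases b with k | (k | (k | jk))
        · simp only [hG13, Matrix.vecMul, dotProduct, Matrix.of_apply, Sum.elim_inl]
          exact huYe k
        · simp only [hG13, Matrix.vecMul, dotProduct, Matrix.of_apply, Sum.elim_inl,
            Sum.elim_inr]
          exact huYe k
        · simp only [hG13, Matrix.vecMul, dotProduct, Matrix.of_apply, Sum.elim_inl,
            Sum.elim_inr]
          simpa [Matrix.vecMul, dotProduct] using congrFun hHYv k
        · simp only [hG13, Matrix.vecMul, dotProduct, Matrix.of_apply, Sum.elim_inr]
          simpa [Matrix.vecMul, dotProduct] using congrFun hHYv jk.2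
      have hT4 : ((fun jk : {j : Fin N // j ≠ i} × Fin h => Hv jk.2) ⬝ᵥ
          (fun jk => (θt jk.1.1)⁻¹ * Hv jk.2)) = T * (Hv ⬝ᵥ Hv) := by
        simp only [dotProduct, hT_def]
        rw [Fintype.sum_prod_type, Finset.sum_mul]
        refine Finset.sum_congr rfl fun j _ => ?_
        rw [Finset.mul_sum]
        exact Finset.sum_congr rfl fun k _ => by ring
      rw [h3, hw3_def, sumElim_dotProduct_sumElim, sumElim_dotProduct_sumElim,
        sumElim_dotProduct_sumElim, dotProduct_smul, dotProduct_smul, hT4]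
      simp only [smul_eq_mul]
      ring
    have he : w3 ⬝ᵥ (G33 *ᵥ w3) = -(v ⬝ᵥ (R *ᵥ v)) - βb⁻¹ * (v ⬝ᵥ v)
        - τt⁻¹ * (Hv ⬝ᵥ Hv) - T * (Hv ⬝ᵥ Hv) := by
      have h4 : G33 *ᵥ w3 = Sum.elim (-v) (Sum.elim (-v) (Sum.elim (-Hv)
          (fun jk => -Hv jk.2))) := by
        have hlast : (Matrix.of fun (a b : {j : Fin N // j ≠ i} × Fin h) =>
            if a = b then -θt a.1.1 else 0) *ᵥ (fun jk => (θt jk.1.1)⁻¹ * Hv jk.2)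
            = fun jk => -Hv jk.2 := by
          funext a
          simp only [Matrix.mulVec, dotProduct, Matrix.of_apply, ite_mul,
            zero_mul, Finset.sum_ite_eq, Finset.mem_univ, if_true]
          rw [neg_mul, ← mul_assoc, mul_inv_cancel₀ (hθt a.1.1).ne', one_mul]
        rw [hG33, hw3_def, Matrix.fromBlocks_mulVec]
        simp only [Sum.elim_comp_inl, Sum.elim_comp_inr]
        rw [Matrix.zero_mulVec, add_zero, Matrix.neg_mulVec, Matrix.mulVec_mulVec,
          Matrix.nonsing_inv_mul _ hRdet, Matrix.one_mulVec, Matrix.zero_mulVec, zero_add,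
          Matrix.fromBlocks_mulVec]
        simp only [Sum.elim_comp_inl, Sum.elim_comp_inr]
        rw [Matrix.zero_mulVec, add_zero, Matrix.neg_mulVec, Matrix.smul_mulVec,
          Matrix.one_mulVec, smul_smul, mul_inv_cancel₀ hβb.ne', one_smul,
          Matrix.zero_mulVec, zero_add, Matrix.fromBlocks_mulVec]
        simp only [Sum.elim_comp_inl, Sum.elim_comp_inr]
        rw [Matrix.zero_mulVec, add_zero, Matrix.neg_mulVec, Matrix.smul_mulVec,
          Matrix.one_mulVec, smul_smul, mul_inv_cancel₀ hτt.ne', one_smul,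
          Matrix.zero_mulVec, zero_add, hlast]
      have hT5 : ((fun jk : {j : Fin N // j ≠ i} × Fin h => (θt jk.1.1)⁻¹ * Hv jk.2) ⬝ᵥ
          (fun jk => -Hv jk.2)) = -(T * (Hv ⬝ᵥ Hv)) := by
        simp only [dotProduct, hT_def]
        rw [Fintype.sum_prod_type, Finset.sum_mul, ← Finset.sum_neg_distrib]
        refine Finset.sum_congr rfl fun j _ => ?_
        rw [Finset.mul_sum, ← Finset.sum_neg_distrib]
        exact Finset.sum_congr rfl fun k _ => by ring
      rw [h4, hw3_def, sumElim_dotProduct_sumElim, sumElim_dotProduct_sumElim,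
        sumElim_dotProduct_sumElim, hT5, dotProduct_neg, dotProduct_comm,
        smul_dotProduct, smul_dotProduct, dotProduct_neg, dotProduct_neg]
      simp only [smul_eq_mul]
      ring
    -- assembling the quadratic form of the big LMI matrix
    have hquad : w ⬝ᵥ ((Matrix.fromBlocks G11
        (Matrix.of fun a b => Sum.elim (G12 a) (G13 a) b)
        (Matrix.of fun a b => Sum.elim (fun c => G12 b c) (fun c => G13 b c) a)
        (Matrix.fromBlocks G22 0 0 G33)) *ᵥ w)
        = u ⬝ᵥ (G11 *ᵥ u) + 2 * ((u ᵥ* G12) ⬝ᵥ w2) + 2 * ((u ᵥ* G13) ⬝ᵥ w3)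
          + w2 ⬝ᵥ (G22 *ᵥ w2) + w3 ⬝ᵥ (G33 *ᵥ w3) := by
      have hCw : (Matrix.of fun a b => Sum.elim (G12 a) (G13 a) b) *ᵥ (Sum.elim w2 w3)
          = G12 *ᵥ w2 + G13 *ᵥ w3 := by
        funext a
        simp only [Matrix.mulVec, dotProduct, Matrix.of_apply, Fintype.sum_sum_type,
          Sum.elim_inl, Sum.elim_inr, Pi.add_apply]
      have hDu : (Matrix.of fun a b => Sum.elim (fun c => G12 b c) (fun c => G13 b c) a) *ᵥ u
          = Sum.elim (u ᵥ* G12) (u ᵥ* G13) := by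
        funext b
        rcases b with p | k
        · simp only [Matrix.mulVec, Matrix.vecMul, dotProduct, Matrix.of_apply,
            Sum.elim_inl]
          exact Finset.sum_congr rfl fun a _ => mul_comm _ _
        · simp only [Matrix.mulVec, Matrix.vecMul, dotProduct, Matrix.of_apply,
            Sum.elim_inr]
          exact Finset.sum_congr rfl fun a _ => mul_comm _ _
      have helim : Sum.elim (u ᵥ* G12) (u ᵥ* G13) + Sum.elim (G22 *ᵥ w2) (G33 *ᵥ w3)
          = Sum.elim (u ᵥ* G12 + G22 *ᵥ w2) (u ᵥ* G13 + G33 *ᵥ w3) := by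
        funext b; rcases b with p | k <;> simp
      rw [hw_def, Matrix.fromBlocks_mulVec]
      simp only [Sum.elim_comp_inl, Sum.elim_comp_inr]
      rw [hCw, hDu, Matrix.fromBlocks_mulVec]
      simp only [Sum.elim_comp_inl, Sum.elim_comp_inr]
      rw [Matrix.zero_mulVec, add_zero, Matrix.zero_mulVec, zero_add, helim,
        sumElim_dotProduct_sumElim, sumElim_dotProduct_sumElim, dotProduct_add,
        dotProduct_add, dotProduct_add, dotProduct_add,
        dotProduct_mulVec u G12 w2, dotProduct_mulVec u G13 w3,
        dotProduct_comm w2 (u ᵥ* G12), dotProduct_comm w3 (u ᵥ* G13)]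
      ring
    -- the quadratic form of the Riccati matrix
    have hric : v ⬝ᵥ ((Aᵀ * X μ + X μ * A + ∑ ν : Fin M, q ν • X ν + R
        + X μ * (B2 * B2ᵀ - B * Gw⁻¹ * Bᵀ) * X μ
        + (τu * βu) • (1 : Matrix (Fin n) (Fin n) ℝ)
        + (τ + θbar) • (Hᵀ * H)) *ᵥ v)
        = v ⬝ᵥ (Aᵀ *ᵥ u) + u ⬝ᵥ (A *ᵥ v) + (q μ * (v ⬝ᵥ u) + S) + v ⬝ᵥ (R *ᵥ v)
          + u ⬝ᵥ ((B2 * B2ᵀ - B * Gw⁻¹ * Bᵀ) *ᵥ u)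
          + βb⁻¹ * (v ⬝ᵥ v) + (τt⁻¹ + T) * (Hv ⬝ᵥ Hv) := by
      have t1 : v ⬝ᵥ ((Aᵀ * X μ) *ᵥ v) = v ⬝ᵥ (Aᵀ *ᵥ u) := by
        rw [← Matrix.mulVec_mulVec, ← hu_def]
      have t2 : v ⬝ᵥ ((X μ * A) *ᵥ v) = u ⬝ᵥ (A *ᵥ v) := by
        rw [← Matrix.mulVec_mulVec, dot_symm_shift (hXt μ), ← hu_def]
      have t3 : v ⬝ᵥ ((∑ ν : Fin M, q ν • X ν) *ᵥ v) = q μ * (v ⬝ᵥ u) + S := by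
        rw [finsum_mulVec, dotProduct_finsum]
        simp only [Matrix.smul_mulVec, dotProduct_smul, smul_eq_mul]
        rw [← Finset.add_sum_erase Finset.univ _ (Finset.mem_univ μ), ← hu_def, hS_def]
        congr 1
        exact Finset.sum_subtype _ (fun x => by simp) _
      have t4 : v ⬝ᵥ ((X μ * (B2 * B2ᵀ - B * Gw⁻¹ * Bᵀ) * X μ) *ᵥ v)
          = u ⬝ᵥ ((B2 * B2ᵀ - B * Gw⁻¹ * Bᵀ) *ᵥ u) := by
        rw [← Matrix.mulVec_mulVec, ← Matrix.mulVec_mulVec, ← hu_def,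
          dot_symm_shift (hXt μ), ← hu_def]
      have t5 : v ⬝ᵥ (((τu * βu) • (1 : Matrix (Fin n) (Fin n) ℝ)) *ᵥ v)
          = βb⁻¹ * (v ⬝ᵥ v) := by
        rw [Matrix.smul_mulVec, Matrix.one_mulVec, dotProduct_smul, smul_eq_mul,
          hτu, hβu]
        congr 1
        field_simp
      have t6 : v ⬝ᵥ (((τ + θbar) • (Hᵀ * H)) *ᵥ v) = (τt⁻¹ + T) * (Hv ⬝ᵥ Hv) := by
        rw [Matrix.smul_mulVec, dotProduct_smul, smul_eq_mul, ← Matrix.mulVec_mulVec,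
          dotProduct_mulVec, Matrix.vecMul_transpose, ← hHv_def]
        congr 1
        rw [hτ, hθbar, hT_def]
        congr 1
        simp only [hθ]
        exact Finset.sum_subtype _ (fun x => by simp) _
      rw [Matrix.add_mulVec, Matrix.add_mulVec, Matrix.add_mulVec, Matrix.add_mulVec,
        Matrix.add_mulVec, Matrix.add_mulVec, dotProduct_add, dotProduct_add,
        dotProduct_add, dotProduct_add, dotProduct_add, dotProduct_add,
        t1, t2, t3, t4, t5, t6]
    -- conclude
    rw [star_trivial, Matrix.neg_mulVec, dotProduct_neg] at hw ⊢
    rw [hquad, ha, hb, hc, hd, he] at hw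
    rw [hric]
    linarith
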